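/- Let E = ℂⁿ with its standard Hermitian inner product, let C, V, Q be linear subspaces of E with Q ⊆ C, let Π_C be the orthogonal projection onto C, and let P : E → E be a linear projector onto Q (P ∘ P = P, range P = Q). Let r₀ ∈ E and r₁ = (I − Π_C) r₀. Then inf_{d₁ ∈ V + C} ‖r₀ − d₁‖ ≤ inf_{d₂ ∈ (I − P)(V)} ‖(I − P) r₁ − d₂‖; that is, when the recycling space C contains the subspace Q, the GCRO-DR residual bound reduces to that of the deflated problem. -/

import Mathlib

/-- The orthogonal projection of `ℂⁿ` onto a subspace, as a continuous linear
endomorphism of `ℂⁿ`. -/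
noncomputable def orthProj {n : ℕ} (S : Submodule ℂ (EuclideanSpace ℂ (Fin n))) :
    EuclideanSpace ℂ (Fin n) →L[ℂ] EuclideanSpace ℂ (Fin n) :=
  S.subtypeL.comp (S.orthogonalProjectionOnto)

/-- When the recycling space `C` contains the subspace `Q` (with `P` a linear projector
onto `Q`), the GCRO-DR residual bound reduces to that of the deflated problem:
`inf_{d₁ ∈ V + C} ‖r₀ − d₁‖ ≤ inf_{d₂ ∈ (I − P)(V)} ‖(I − P) r₁ − d₂‖`
where `r₁ = (I − Π_C) r₀`. -/
theorem gcrodr_deflated_bound_of_le {n : ℕ}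
    (C V Q : Submodule ℂ (EuclideanSpace ℂ (Fin n))) (hQC : Q ≤ C)
    (P : EuclideanSpace ℂ (Fin n) →L[ℂ] EuclideanSpace ℂ (Fin n))
    (hP : P.comp P = P) (hPrange : LinearMap.range P.toLinearMap = Q)
    (r₀ r₁ : EuclideanSpace ℂ (Fin n)) (hr₁ : r₁ = r₀ - orthProj C r₀) :
    Metric.infDist r₀ ((V ⊔ C : Submodule ℂ (EuclideanSpace ℂ (Fin n))) : Set _) ≤
      Metric.infDist (r₁ - P r₁) ((fun x => x - P x) '' (V : Set _)) := by
  have hT : ((fun x => x - P x) '' (V : Set _)).Nonempty :=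
    ⟨(fun x => x - P x) 0, Set.mem_image_of_mem _ V.zero_mem⟩
  by_contra hcon
  push_neg at hcon
  obtain ⟨y, hy, hlt⟩ := (Metric.infDist_lt_iff hT).1 hcon
  obtain ⟨v, hv, rfl⟩ := hy
  refine absurd hlt (not_lt.2 ?_)
  -- the candidate element of V ⊔ C
  have hPmem : ∀ x, P x ∈ C := fun x => hQC (hPrange ▸ LinearMap.mem_range_self P.toLinearMap x)
  have hprojmem : orthProj C r₀ ∈ C := (C.orthogonalProjectionOnto r₀).2
  have hd₁ : v + (orthProj C r₀ + P r₁ - P v) ∈ (V ⊔ C : Submodule ℂ _) := by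
    exact Submodule.add_mem_sup hv
      (C.sub_mem (C.add_mem hprojmem (hPmem r₁)) (hPmem v))
  calc Metric.infDist r₀ ((V ⊔ C : Submodule ℂ (EuclideanSpace ℂ (Fin n))) : Set _)
      ≤ dist r₀ (v + (orthProj C r₀ + P r₁ - P v)) :=
        Metric.infDist_le_dist_of_mem hd₁
    _ = dist (r₁ - P r₁) (v - P v) := by
        rw [dist_eq_norm, dist_eq_norm, hr₁]
        congr 1; abel
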